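/- Let G = (R, C) be a bi-matrix game on n pure strategies and let σ be strictly less than every entry of R and C. Define the duplicated game G′ on strategy set Fin n ⊕ Fin n (strategies S₁ = inl copies, S₂ = inr copies) by: U′₁(inl i, inr j) = U′₁(inl i, inl j) = R i j, U′₁(inr i, b) = σ for all b; U′₂(inl i, inr j) = U′₂(inr i, inr j) = C i j, U′₂(a, inl j) = σ for all a. Then: (i) for every Nash equilibrium (x, y) of G, the lifted profile (ι₁ x, ι₂ y) — where ι₁ x puts weight xᵢ on inl i and ι₂ y puts weight yⱼ on inr j — is a Nash equilibrium of G′ with disjoint supports; and (ii) every Nash equilibrium of G′ is of the form (ι₁ x, ι₂ y) for some Nash equilibrium (x, y) of G; in particular every Nash equilibrium of G′ has a disjoint support profile. -/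
import Mathlib


open Finset

/-- The probability simplex over a finite strategy set `S`. -/
def simplex (S : Type*) [Fintype S] : Set (S → ℝ) :=
  {x | (∀ i, 0 ≤ x i) ∧ ∑ i, x i = 1}

/-- Expected payoff `Σᵢⱼ xᵢ yⱼ A i j`. -/
def payoff {S : Type*} [Fintype S] (A : S → S → ℝ) (x y : S → ℝ) : ℝ :=
  ∑ i, ∑ j, x i * y j * A i j

/-- The point mass at pure strategy `s`. -/
def pureStrat {S : Type*} [DecidableEq S] (s : S) : S → ℝ :=
  fun i => if i = s then 1 else 0

/-- Support of a mixed strategy. -/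
def supp {S : Type*} (x : S → ℝ) : Set S := {i | 0 < x i}

/-- L1 distance between mixed strategies. -/
def dist1 {S : Type*} [Fintype S] (x y : S → ℝ) : ℝ := ∑ i, |x i - y i|

/-- `(x, y)` is an ε-Nash equilibrium of the bi-matrix game `(R, C)`. -/
def IsEpsNash {S : Type*} [Fintype S] [DecidableEq S]
    (R C : S → S → ℝ) (x y : S → ℝ) (ε : ℝ) : Prop :=
  x ∈ simplex S ∧ y ∈ simplex S ∧
  (∀ s : S, payoff R (pureStrat s) y ≤ payoff R x y + ε) ∧
  (∀ s : S, payoff C x (pureStrat s) ≤ payoff C x y + ε)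

/-- Row payoff matrix of the duplicated game `G'`. -/
def dupR {n : ℕ} (R : Fin n → Fin n → ℝ) (σ : ℝ) :
    (Fin n ⊕ Fin n) → (Fin n ⊕ Fin n) → ℝ
  | Sum.inl i, Sum.inl j => R i j
  | Sum.inl i, Sum.inr j => R i j
  | Sum.inr _, _ => σ

/-- Column payoff matrix of the duplicated game `G'`. -/
def dupC {n : ℕ} (C : Fin n → Fin n → ℝ) (σ : ℝ) :
    (Fin n ⊕ Fin n) → (Fin n ⊕ Fin n) → ℝ
  | Sum.inl i, Sum.inr j => C i j
  | Sum.inr i, Sum.inr j => C i j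
  | _, Sum.inl _ => σ

/-- Lift of a row-player mixed strategy into the duplicated game (weights on `inl`). -/
def lift1 {n : ℕ} (x : Fin n → ℝ) : (Fin n ⊕ Fin n) → ℝ
  | Sum.inl i => x i
  | Sum.inr _ => 0

/-- Lift of a column-player mixed strategy into the duplicated game (weights on `inr`). -/
def lift2 {n : ℕ} (y : Fin n → ℝ) : (Fin n ⊕ Fin n) → ℝ
  | Sum.inl _ => 0
  | Sum.inr j => y j

open Finset in
lemma payoff_pure_left {S : Type*} [Fintype S] [DecidableEq S] (A : S → S → ℝ) (s : S) (y : S → ℝ) :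
    payoff A (pureStrat s) y = ∑ j, y j * A s j := by
  rw [payoff, Finset.sum_comm]
  simp [pureStrat, ite_mul, zero_mul, one_mul, Finset.sum_ite_eq']

open Finset in
lemma payoff_pure_right {S : Type*} [Fintype S] [DecidableEq S] (A : S → S → ℝ) (s : S) (x : S → ℝ) :
    payoff A x (pureStrat s) = ∑ i, x i * A i s := by
  simp [payoff, pureStrat, mul_ite, ite_mul, zero_mul, mul_zero, one_mul, mul_one,
    Finset.sum_ite_eq']

open Finset in
lemma payoff_eq_left {S : Type*} [Fintype S] (A : S → S → ℝ) (x y : S → ℝ) :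
    payoff A x y = ∑ i, x i * ∑ j, y j * A i j := by
  simp [payoff, Finset.mul_sum, mul_assoc]

open Finset in
lemma payoff_eq_right {S : Type*} [Fintype S] (A : S → S → ℝ) (x y : S → ℝ) :
    payoff A x y = ∑ j, y j * ∑ i, x i * A i j := by
  rw [payoff, Finset.sum_comm]
  congr 1; ext j; rw [Finset.mul_sum]; congr 1; ext i; ring
open Finset in
lemma lt_weighted {S : Type*} [Fintype S] {σ : ℝ} (w f : S → ℝ) (hw : ∀ b, 0 ≤ w b)
    (hs : ∑ b, w b = 1) (hf : ∀ b, σ < f b) : σ < ∑ b, w b * f b := by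
  obtain ⟨b0, hb0⟩ : ∃ b, 0 < w b := by
    by_contra h; push_neg at h
    have : ∑ b, w b ≤ 0 := Finset.sum_nonpos (fun b _ => h b)
    linarith
  calc σ = ∑ b, w b * σ := by rw [← Finset.sum_mul, hs, one_mul]
  _ < ∑ b, w b * f b := Finset.sum_lt_sum
      (fun b _ => mul_le_mul_of_nonneg_left (hf b).le (hw b))
      ⟨b0, Finset.mem_univ b0, mul_lt_mul_of_pos_left (hf b0) hb0⟩

open Finset in
lemma le_weighted {S : Type*} [Fintype S] {σ : ℝ} (w f : S → ℝ) (hw : ∀ b, 0 ≤ w b)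
    (hs : ∑ b, w b = 1) (hf : ∀ b, σ ≤ f b) : σ ≤ ∑ b, w b * f b := by
  calc σ = ∑ b, w b * σ := by rw [← Finset.sum_mul, hs, one_mul]
  _ ≤ ∑ b, w b * f b := Finset.sum_le_sum
      (fun b _ => mul_le_mul_of_nonneg_left (hf b) (hw b))

open Finset in
lemma payoff_lift1R {n : ℕ} (R : Fin n → Fin n → ℝ) (σ : ℝ) (x y : Fin n → ℝ) :
    payoff (dupR R σ) (lift1 x) (lift2 y) = payoff R x y := by
  simp [payoff, Fintype.sum_sum_type, lift1, lift2, dupR]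

open Finset in
lemma payoff_lift2C {n : ℕ} (C : Fin n → Fin n → ℝ) (σ : ℝ) (x y : Fin n → ℝ) :
    payoff (dupC C σ) (lift1 x) (lift2 y) = payoff C x y := by
  simp [payoff, Fintype.sum_sum_type, lift1, lift2, dupC]

lemma lift1_simplex {n : ℕ} {x : Fin n → ℝ} (hx : x ∈ simplex (Fin n)) :
    lift1 x ∈ simplex (Fin n ⊕ Fin n) := by
  constructor
  · rintro (i | i) <;> simp [lift1] <;> exact hx.1 i
  · simp [Fintype.sum_sum_type, lift1, hx.2]

lemma lift2_simplex {n : ℕ} {y : Fin n → ℝ} (hy : y ∈ simplex (Fin n)) :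
    lift2 y ∈ simplex (Fin n ⊕ Fin n) := by
  constructor
  · rintro (i | i) <;> simp [lift2] <;> exact hy.1 i
  · simp [Fintype.sum_sum_type, lift2, hy.2]

lemma supp_disjoint {n : ℕ} (x y : Fin n → ℝ) :
    supp (lift1 x) ∩ supp (lift2 y) = ∅ := by
  ext a
  rcases a with i | i <;> simp [supp, lift1, lift2]
open Finset in
lemma part1 {n : ℕ} (R C : Fin n → Fin n → ℝ) (σ : ℝ)
    (hσR : ∀ i j, σ < R i j) (hσC : ∀ i j, σ < C i j)
    (x y : Fin n → ℝ) (h : IsEpsNash R C x y 0) :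
    IsEpsNash (dupR R σ) (dupC C σ) (lift1 x) (lift2 y) 0 := by
  obtain ⟨hx, hy, hr, hc⟩ := h
  have hσP1 : σ ≤ payoff R x y := by
    rw [payoff_eq_left]
    exact le_weighted _ _ hx.1 hx.2 fun i =>
      le_weighted _ _ hy.1 hy.2 fun j => (hσR i j).le
  have hσP2 : σ ≤ payoff C x y := by
    rw [payoff_eq_left]
    exact le_weighted _ _ hx.1 hx.2 fun i =>
      le_weighted _ _ hy.1 hy.2 fun j => (hσC i j).le
  refine ⟨lift1_simplex hx, lift2_simplex hy, ?_, ?_⟩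
  · rintro (i | i)
    · rw [payoff_pure_left, payoff_lift1R]
      have : ∑ b, lift2 y b * dupR R σ (Sum.inl i) b = ∑ j, y j * R i j := by
        simp [Fintype.sum_sum_type, lift2, dupR]
      rw [this]
      have := hr i
      rwa [payoff_pure_left] at this
    · rw [payoff_pure_left, payoff_lift1R]
      have : ∑ b, lift2 y b * dupR R σ (Sum.inr i) b = σ := by
        have : ∀ b, lift2 y b * dupR R σ (Sum.inr i) b = lift2 y b * σ := by
          rintro (b | b) <;> rfl
        rw [Finset.sum_congr rfl fun b _ => this b, ← Finset.sum_mul,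
          (lift2_simplex hy).2, one_mul]
      rw [this]; linarith
  · rintro (j | j)
    · rw [payoff_pure_right, payoff_lift2C]
      have : ∑ a, lift1 x a * dupC C σ a (Sum.inl j) = σ := by
        have h2 : ∀ a, lift1 x a * dupC C σ a (Sum.inl j) = lift1 x a * σ := by
          rintro (a | a) <;> rfl
        rw [Finset.sum_congr rfl fun a _ => h2 a, ← Finset.sum_mul,
          (lift1_simplex hx).2, one_mul]
      rw [this]; linarith
    · rw [payoff_pure_right, payoff_lift2C]
      have : ∑ a, lift1 x a * dupC C σ a (Sum.inr j) = ∑ i, x i * C i j := by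
        simp [Fintype.sum_sum_type, lift1, dupC]
      rw [this]
      have := hc j
      rwa [payoff_pure_right] at this
open Finset in
lemma part2 {n : ℕ} (R C : Fin n → Fin n → ℝ) (σ : ℝ)
    (hσR : ∀ i j, σ < R i j) (hσC : ∀ i j, σ < C i j)
    (x' y' : (Fin n ⊕ Fin n) → ℝ) (h : IsEpsNash (dupR R σ) (dupC C σ) x' y' 0) :
    ∃ x y : Fin n → ℝ, IsEpsNash R C x y 0 ∧ x' = lift1 x ∧ y' = lift2 y := by
  obtain ⟨hx', hy', hr, hc⟩ := h
  -- n positive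
  rcases Nat.eq_zero_or_pos n with hn | hn
  · exfalso
    subst hn
    have := hx'.2
    simp at this
  set i0 : Fin n := ⟨0, hn⟩
  set D := dupR R σ with hD
  set E := dupC C σ with hE
  set P1 := payoff D x' y' with hP1
  set P2 := payoff E x' y' with hP2
  set u : (Fin n ⊕ Fin n) → ℝ := fun a => ∑ b, y' b * D a b with hu
  set v : (Fin n ⊕ Fin n) → ℝ := fun b => ∑ a, x' a * E a b with hv
  have huP : ∀ a, u a ≤ P1 := by
    intro a
    have := hr a
    rw [payoff_pure_left] at this
    show ∑ b, y' b * D a b ≤ P1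
    linarith
  have hvP : ∀ b, v b ≤ P2 := by
    intro b
    have := hc b
    rw [payoff_pure_right] at this
    show ∑ a, x' a * E a b ≤ P2
    linarith
  have hDσ : ∀ i b, σ < D (Sum.inl i) b := by
    rintro i (b | b) <;> exact hσR i b
  have hEσ : ∀ j a, σ < E a (Sum.inr j) := by
    rintro j (a | a) <;> exact hσC a j
  have hσP1 : σ < P1 := lt_of_lt_of_le (by
    exact lt_weighted _ _ hy'.1 hy'.2 (hDσ i0)) (huP (Sum.inl i0))
  have hσP2 : σ < P2 := lt_of_lt_of_le (by
    have : σ < v (Sum.inr i0) := lt_weighted _ _ hx'.1 hx'.2 (hEσ i0)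
    exact this) (hvP (Sum.inr i0))
  have huσ : ∀ i, u (Sum.inr i) = σ := by
    intro i
    have : ∀ b, y' b * D (Sum.inr i) b = y' b * σ := by rintro (b | b) <;> rfl
    rw [hu]
    simp only
    rw [Finset.sum_congr rfl fun b _ => this b, ← Finset.sum_mul, hy'.2, one_mul]
  have hvσ : ∀ j, v (Sum.inl j) = σ := by
    intro j
    have : ∀ a, x' a * E a (Sum.inl j) = x' a * σ := by rintro (a | a) <;> rfl
    rw [hv]
    simp only
    rw [Finset.sum_congr rfl fun a _ => this a, ← Finset.sum_mul, hx'.2, one_mul]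
  have hxr : ∀ i, x' (Sum.inr i) = 0 := by
    intro i
    by_contra hne
    have hpos : 0 < x' (Sum.inr i) := lt_of_le_of_ne (hx'.1 _) (Ne.symm hne)
    have : P1 < P1 := by
      calc P1 = ∑ a, x' a * u a := by rw [hP1, payoff_eq_left]
      _ < ∑ a, x' a * P1 := Finset.sum_lt_sum
          (fun a _ => mul_le_mul_of_nonneg_left (huP a) (hx'.1 a))
          ⟨Sum.inr i, Finset.mem_univ _, by
            rw [huσ i]; exact mul_lt_mul_of_pos_left hσP1 hpos⟩
      _ = P1 := by rw [← Finset.sum_mul, hx'.2, one_mul]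
    exact lt_irrefl _ this
  have hyl : ∀ j, y' (Sum.inl j) = 0 := by
    intro j
    by_contra hne
    have hpos : 0 < y' (Sum.inl j) := lt_of_le_of_ne (hy'.1 _) (Ne.symm hne)
    have : P2 < P2 := by
      calc P2 = ∑ b, y' b * v b := by rw [hP2, payoff_eq_right]
      _ < ∑ b, y' b * P2 := Finset.sum_lt_sum
          (fun b _ => mul_le_mul_of_nonneg_left (hvP b) (hy'.1 b))
          ⟨Sum.inl j, Finset.mem_univ _, by
            rw [hvσ j]; exact mul_lt_mul_of_pos_left hσP2 hpos⟩
      _ = P2 := by rw [← Finset.sum_mul, hy'.2, one_mul]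
    exact lt_irrefl _ this
  refine ⟨fun i => x' (Sum.inl i), fun j => y' (Sum.inr j), ?_, ?_, ?_⟩
  · set x : Fin n → ℝ := fun i => x' (Sum.inl i) with hx
    set y : Fin n → ℝ := fun j => y' (Sum.inr j) with hy
    have hxeq : x' = lift1 x := by
      funext a; rcases a with i | i
      · rfl
      · exact hxr i
    have hyeq : y' = lift2 y := by
      funext b; rcases b with j | j
      · exact hyl j
      · rfl
    have hxs : x ∈ simplex (Fin n) := by
      refine ⟨fun i => hx'.1 _, ?_⟩
      have := hx'.2
      rw [hxeq] at this
      simpa [Fintype.sum_sum_type, lift1] using this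
    have hys : y ∈ simplex (Fin n) := by
      refine ⟨fun j => hy'.1 _, ?_⟩
      have := hy'.2
      rw [hyeq] at this
      simpa [Fintype.sum_sum_type, lift2] using this
    refine ⟨hxs, hys, ?_, ?_⟩
    · intro s
      have := hr (Sum.inl s)
      rw [payoff_pure_left, hP1, hyeq, hxeq, payoff_lift1R] at this
      have h2 : ∑ b, lift2 y b * D (Sum.inl s) b = ∑ j, y j * R s j := by
        simp [Fintype.sum_sum_type, lift2, hD, dupR]
      rw [h2] at this
      rw [payoff_pure_left]
      simpa using this
    · intro s
      have := hc (Sum.inr s)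
      rw [payoff_pure_right, hP2, hyeq, hxeq, payoff_lift2C] at this
      have h2 : ∑ a, lift1 x a * E a (Sum.inr s) = ∑ i, x i * C i s := by
        simp [Fintype.sum_sum_type, lift1, hE, dupC]
      rw [h2] at this
      rw [payoff_pure_right]
      simpa using this
  · funext a; rcases a with i | i
    · rfl
    · exact hxr i
  · funext b; rcases b with j | j
    · exact hyl j
    · rfl
theorem stmt11 {n : ℕ} (R C : Fin n → Fin n → ℝ) (σ : ℝ)
    (hσR : ∀ i j, σ < R i j) (hσC : ∀ i j, σ < C i j) :
    (∀ x y : Fin n → ℝ, IsEpsNash R C x y 0 →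
      IsEpsNash (dupR R σ) (dupC C σ) (lift1 x) (lift2 y) 0 ∧
      supp (lift1 x) ∩ supp (lift2 y) = ∅) ∧
    (∀ x' y' : (Fin n ⊕ Fin n) → ℝ, IsEpsNash (dupR R σ) (dupC C σ) x' y' 0 →
      (∃ x y : Fin n → ℝ, IsEpsNash R C x y 0 ∧ x' = lift1 x ∧ y' = lift2 y) ∧
      supp x' ∩ supp y' = ∅) := by
  constructor
  · intro x y h
    exact ⟨part1 R C σ hσR hσC x y h, supp_disjoint x y⟩
  · intro x' y' h
    obtain ⟨x, y, hN, hx, hy⟩ := part2 R C σ hσR hσC x' y' h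
    refine ⟨⟨x, y, hN, hx, hy⟩, ?_⟩
    rw [hx, hy]
    exact supp_disjoint x y
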